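/- Let F be a distribution function and α > 0. The following are equivalent: (i) there exist aₙ > 0 and bₙ ∈ ℝ such that for every x ∈ ℝ, F^{⊡n}(aₙ·x + bₙ) → B_α(x) as n → ∞; (iii) ω(F) = sup{x ∈ ℝ : F(x) < 1} is finite, and for every x > 0, (1 − F(ω(F) − x·h))/(1 − F(ω(F) − h)) → x^α as h ↓ 0 (i.e., h ↦ 1 − F(ω(F) − h) is regularly varying at 0 of exponent α; note 1 − F(ω(F) − h) > 0 for h > 0). -/

import Mathlib

open Filter Topology

def IsDistFun (F : ℝ → ℝ) : Prop :=
  Monotone F ∧ (∀ x, ContinuousWithinAt F (Set.Ici x) x) ∧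
    Tendsto F atBot (𝓝 0) ∧ Tendsto F atTop (𝓝 1)

noncomputable def freePow (F : ℝ → ℝ) (n : ℕ) (x : ℝ) : ℝ :=
  max ((n : ℝ) * F x - ((n : ℝ) - 1)) 0

noncomputable def betaDF (α : ℝ) (x : ℝ) : ℝ :=
  if x ≤ -1 then 0 else if x ≤ 0 then 1 - |x| ^ α else 1

lemma F_le_one {F : ℝ → ℝ} (hF : IsDistFun F) (y : ℝ) : F y ≤ 1 :=
  ge_of_tendsto hF.2.2.2 ((eventually_ge_atTop y).mono fun z hz => hF.1 hz)

lemma setne {F : ℝ → ℝ} (hF : IsDistFun F) : {y : ℝ | F y < 1}.Nonempty := by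
  have := hF.2.2.1.eventually_lt_const (show (0:ℝ) < 1 by norm_num)
  rcases this.exists with ⟨y, hy⟩
  exact ⟨y, hy⟩

/-- Extraction of tail limits from the free convergence hypothesis. -/
lemma tail_limit {F : ℝ → ℝ} (hF : IsDistFun F) {α : ℝ} (hα : 0 < α)
    {a b : ℕ → ℝ}
    (hconv : ∀ x : ℝ, Tendsto (fun n => freePow F n (a n * x + b n)) atTop
      (𝓝 (betaDF α x))) :
    ∀ t ∈ Set.Ico (0:ℝ) 1,
      Tendsto (fun n : ℕ => (n:ℝ) * (1 - F (b n - a n * t))) atTop (𝓝 (t ^ α)) := by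
  intro t ht
  have hbeta : betaDF α (-t) = 1 - t ^ α := by
    rw [betaDF, if_neg (by intro hcontra; linarith [ht.2]), if_pos (by linarith [ht.1]),
      abs_neg, abs_of_nonneg ht.1]
  have htα : t ^ α < 1 := Real.rpow_lt_one ht.1 ht.2 hα
  have hc := hconv (-t)
  rw [hbeta] at hc
  have hev : ∀ᶠ n in atTop, 0 < freePow F n (a n * (-t) + b n) :=
    hc.eventually_const_lt (by linarith)
  have key : Tendsto (fun n => 1 - freePow F n (a n * (-t) + b n)) atTop (𝓝 (t ^ α)) := by
    have h1 : Tendsto (fun _ : ℕ => (1:ℝ)) atTop (𝓝 1) := tendsto_const_nhds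
    have := h1.sub hc
    simpa using this
  apply key.congr'
  filter_upwards [hev] with n hn
  have hfp : freePow F n (a n * (-t) + b n)
      = (n:ℝ) * F (a n * (-t) + b n) - ((n:ℝ) - 1) := by
    rw [freePow] at hn ⊢
    rcases le_or_gt ((n:ℝ) * F (a n * (-t) + b n) - ((n:ℝ) - 1)) 0 with h | h
    · rw [max_eq_right h] at hn; linarith
    · exact max_eq_left h.le
  rw [hfp]
  have harg : a n * (-t) + b n = b n - a n * t := by ring
  rw [harg]; ring

/-- The Khinchin-type comparison of normalizing sequences. -/
lemma khinchin {F : ℝ → ℝ} (hmono : Monotone F) {α : ℝ} (hα : 0 < α)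
    {a b : ℕ → ℝ} (hpos : ∀ n, 0 < a n) (φ : ℕ → ℕ) {r : ℝ} (hr0 : 0 < r) (hr1 : r ≤ 1)
    (L1 : ∀ t ∈ Set.Ico (0:ℝ) 1,
      Tendsto (fun n : ℕ => (n:ℝ) * (1 - F (b n - a n * t))) atTop (𝓝 (t ^ α)))
    (Lφ : ∀ t ∈ Set.Ico (0:ℝ) 1,
      Tendsto (fun n : ℕ => (n:ℝ) * (1 - F (b (φ n) - a (φ n) * t))) atTop (𝓝 (r * t ^ α)))
    {ε : ℝ} (hε : 0 < ε) :
    ∀ᶠ n in atTop, |a (φ n) - r ^ α⁻¹ * a n| ≤ ε * a n ∧ |b (φ n) - b n| ≤ ε * a n := by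
  set c := r ^ α⁻¹ with hcdef
  have hc0 : 0 < c := Real.rpow_pos_of_pos hr0 _
  have hc1 : c ≤ 1 := Real.rpow_le_one hr0.le hr1 (by positivity)
  have hcα : c ^ α = r := by
    rw [hcdef, ← Real.rpow_mul hr0.le, inv_mul_cancel₀ hα.ne', Real.rpow_one]
  have vc1 : ∀ s t : ℝ, s ∈ Set.Ico (0:ℝ) 1 → t ∈ Set.Ico (0:ℝ) 1 → r * t ^ α < s ^ α →
      ∀ᶠ n in atTop, b n - a n * s < b (φ n) - a (φ n) * t := by
    intro s t hs ht hlt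
    filter_upwards [(Lφ t ht).eventually_lt (L1 s hs) hlt, eventually_ge_atTop 1]
      with n h1 hn1
    have hnp : (0:ℝ) < n := by exact_mod_cast hn1
    have h2 : 1 - F (b (φ n) - a (φ n) * t) < 1 - F (b n - a n * s) :=
      lt_of_mul_lt_mul_left h1 hnp.le
    have h3 : F (b n - a n * s) < F (b (φ n) - a (φ n) * t) := by linarith
    by_contra hle
    push_neg at hle
    exact absurd (hmono hle) (not_le.2 h3)
  have vc2 : ∀ s t : ℝ, s ∈ Set.Ico (0:ℝ) 1 → t ∈ Set.Ico (0:ℝ) 1 → s ^ α < r * t ^ α →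
      ∀ᶠ n in atTop, b (φ n) - a (φ n) * t < b n - a n * s := by
    intro s t hs ht hlt
    filter_upwards [(L1 s hs).eventually_lt (Lφ t ht) hlt, eventually_ge_atTop 1]
      with n h1 hn1
    have hnp : (0:ℝ) < n := by exact_mod_cast hn1
    have h2 : 1 - F (b n - a n * s) < 1 - F (b (φ n) - a (φ n) * t) :=
      lt_of_mul_lt_mul_left h1 hnp.le
    have h3 : F (b (φ n) - a (φ n) * t) < F (b n - a n * s) := by linarith
    by_contra hle
    push_neg at hle
    exact absurd (hmono hle) (not_le.2 h3)
  set δ := min (ε/8) (min (c/4) (1/8)) with hδdef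
  have hδ0 : 0 < δ := by
    apply lt_min (by linarith) (lt_min (by linarith) (by norm_num))
  have hδε : δ ≤ ε/8 := min_le_left _ _
  have hδc : δ ≤ c/4 := le_trans (min_le_right _ _) (min_le_left _ _)
  have hδ8 : δ ≤ 1/8 := le_trans (min_le_right _ _) (min_le_right _ _)
  have hmem : ∀ t : ℝ, t = 1/2 ∨ t = 3/4 →
      (c*t + δ ∈ Set.Ico (0:ℝ) 1 ∧ c*t - δ ∈ Set.Ico (0:ℝ) 1 ∧
       r * t ^ α < (c*t + δ) ^ α ∧ (c*t - δ) ^ α < r * t ^ α ∧ t ∈ Set.Ico (0:ℝ) 1) := by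
    intro t htt
    have ht1 : 1/2 ≤ t := by rcases htt with h | h <;> rw [h] <;> norm_num
    have ht2 : t ≤ 3/4 := by rcases htt with h | h <;> rw [h] <;> norm_num
    have ht0 : 0 ≤ t := by linarith
    have hct : c * t ≤ 3/4 := by
      have h1 : c * t ≤ 1 * t := mul_le_mul_of_nonneg_right hc1 ht0
      linarith
    have hct2 : c * (1/2) ≤ c * t := mul_le_mul_of_nonneg_left ht1 hc0.le
    have hctpos : c/8 < c * t - δ := by linarith
    have h1 : c*t + δ ∈ Set.Ico (0:ℝ) 1 := ⟨by positivity, by linarith⟩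
    have h2 : c*t - δ ∈ Set.Ico (0:ℝ) 1 := ⟨by linarith [hc0], by linarith⟩
    refine ⟨h1, h2, ?_, ?_, ⟨by linarith, by linarith⟩⟩
    · have hlt : (c*t) ^ α < (c*t + δ) ^ α :=
        Real.rpow_lt_rpow (by positivity) (by linarith) hα
      rwa [Real.mul_rpow hc0.le ht0, hcα] at hlt
    · have hlt : (c*t - δ) ^ α < (c*t) ^ α :=
        Real.rpow_lt_rpow (by linarith [hc0]) (by linarith) hα
      rwa [Real.mul_rpow hc0.le ht0, hcα] at hlt
  obtain ⟨m11, m12, m13, m14, m15⟩ := hmem (1/2) (Or.inl rfl)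
  obtain ⟨m21, m22, m23, m24, m25⟩ := hmem (3/4) (Or.inr rfl)
  filter_upwards [vc1 (c*(1/2) + δ) (1/2) m11 m15 m13,
    vc2 (c*(1/2) - δ) (1/2) m12 m15 m14,
    vc1 (c*(3/4) + δ) (3/4) m21 m25 m23,
    vc2 (c*(3/4) - δ) (3/4) m22 m25 m24,
    eventually_ge_atTop 1] with n A1 B1 A2 B2 hn1
  have hap : 0 < a n := hpos n
  have X1l : -(δ * a n) < (b (φ n) - b n) - (1/2) * (a (φ n) - c * a n) := by linarith
  have X1u : (b (φ n) - b n) - (1/2) * (a (φ n) - c * a n) < δ * a n := by linarith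
  have X2l : -(δ * a n) < (b (φ n) - b n) - (3/4) * (a (φ n) - c * a n) := by linarith
  have X2u : (b (φ n) - b n) - (3/4) * (a (φ n) - c * a n) < δ * a n := by linarith
  have h8 : 8 * δ * a n ≤ ε * a n := by
    have := mul_le_mul_of_nonneg_right (show 8*δ ≤ ε by linarith) hap.le
    linarith
  constructor
  · rw [abs_le]
    constructor <;> linarith
  · rw [abs_le]
    constructor <;> linarith

/-- Iterating the doubling comparison along powers of two. -/
lemma chain {F : ℝ → ℝ} {a b : ℕ → ℝ} (hpos : ∀ n, 0 < a n)
    {κ ε : ℝ} (hκ0 : 0 ≤ κ) (hκ1 : κ < 1) (hε : 0 ≤ ε) {N : ℕ}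
    (hstep : ∀ n, N ≤ n → a (2*n) ≤ κ * a n ∧ |b (2*n) - b n| ≤ ε * a n)
    (hFb : Tendsto (fun n => F (b n)) atTop (𝓝 1))
    (hFle : ∀ y, F y ≤ 1) (hmono : Monotone F)
    (n : ℕ) (hn : N ≤ n) (hn1 : 1 ≤ n) :
    ∃ L : ℝ, Tendsto (fun k => b (2^k * n)) atTop (𝓝 L) ∧
      |b n - L| ≤ ε * a n / (1 - κ) ∧ (∀ y, L < y → F y = 1) ∧
      Tendsto (fun k => a (2^k * n)) atTop (𝓝 0) := by
  have hge : ∀ k, N ≤ 2^k * n := fun k =>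
    le_trans hn (Nat.le_mul_of_pos_left n (Nat.two_pow_pos k))
  have adecay : ∀ k, a (2^k * n) ≤ κ^k * a n := by
    intro k
    induction k with
    | zero => simp
    | succ k ih =>
      have heq : 2^(k+1) * n = 2 * (2^k * n) := by ring
      have h1 := (hstep (2^k * n) (hge k)).1
      rw [heq]
      calc a (2 * (2^k * n)) ≤ κ * a (2^k * n) := h1
      _ ≤ κ * (κ^k * a n) := mul_le_mul_of_nonneg_left ih hκ0
      _ = κ^(k+1) * a n := by ring
  have dstep : ∀ k, dist (b (2^k * n)) (b (2^(k+1) * n)) ≤ (ε * a n) * κ^k := by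
    intro k
    have heq : 2^(k+1) * n = 2 * (2^k * n) := by ring
    rw [Real.dist_eq, abs_sub_comm, heq]
    calc |b (2 * (2^k * n)) - b (2^k * n)| ≤ ε * a (2^k * n) := (hstep _ (hge k)).2
    _ ≤ ε * (κ^k * a n) := mul_le_mul_of_nonneg_left (adecay k) hε
    _ = (ε * a n) * κ^k := by ring
  have hcauchy : CauchySeq (fun k => b (2^k * n)) :=
    cauchySeq_of_le_geometric κ (ε * a n) hκ1 dstep
  obtain ⟨L, hL⟩ := cauchySeq_tendsto_of_complete hcauchy
  have hbound : |b n - L| ≤ ε * a n / (1 - κ) := by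
    have := dist_le_of_le_geometric_of_tendsto₀ κ (ε * a n) hκ1 dstep hL
    simpa [Real.dist_eq] using this
  have hatd : Tendsto (fun k => a (2^k * n)) atTop (𝓝 0) := by
    apply squeeze_zero' (Eventually.of_forall fun k => (hpos _).le)
      (Eventually.of_forall adecay)
    have := (tendsto_pow_atTop_nhds_zero_of_lt_one hκ0 hκ1).mul_const (a n)
    simpa using this
  have hsub : Tendsto (fun k => 2^k * n) atTop atTop := by
    apply tendsto_atTop_mono (fun k => ?_) tendsto_id
    calc k ≤ 2^k := (Nat.lt_two_pow_self).le
    _ ≤ 2^k * n := by calc 2^k = 2^k * 1 := by ring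
                        _ ≤ 2^k * n := Nat.mul_le_mul_left _ hn1
  have hF1 : ∀ y, L < y → F y = 1 := by
    intro y hy
    have hFsub : Tendsto (fun k => F (b (2^k * n))) atTop (𝓝 1) := hFb.comp hsub
    have hev : ∀ᶠ k in atTop, b (2^k * n) ≤ y :=
      (hL.eventually_lt_const hy).mono fun k hk => hk.le
    have : 1 ≤ F y := le_of_tendsto hFsub (hev.mono fun k hk => hmono hk)
    exact le_antisymm (hFle y) this
  exact ⟨L, hL, hbound, hF1, hatd⟩

set_option maxHeartbeats 1600000 in
lemma necessity (F : ℝ → ℝ) (hF : IsDistFun F) (α : ℝ) (hα : 0 < α)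
    (a b : ℕ → ℝ) (hpos : ∀ n, 0 < a n)
    (hconv : ∀ x : ℝ, Tendsto (fun n => freePow F n (a n * x + b n)) atTop
      (𝓝 (betaDF α x))) :
    BddAbove {y : ℝ | F y < 1} ∧
      ∀ x : ℝ, 0 < x →
        Tendsto (fun h => (1 - F (sSup {y : ℝ | F y < 1} - x * h)) /
            (1 - F (sSup {y : ℝ | F y < 1} - h)))
          (𝓝[>] (0 : ℝ)) (𝓝 (x ^ α)) := by
  obtain ⟨hmono, hrc, hbot, htop⟩ := hF
  have hFle : ∀ y, F y ≤ 1 := F_le_one ⟨hmono, hrc, hbot, htop⟩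
  have L1 := tail_limit ⟨hmono, hrc, hbot, htop⟩ hα hconv
  -- F (b n) → 1
  have L0 : Tendsto (fun n : ℕ => (n:ℝ) * (1 - F (b n))) atTop (𝓝 0) := by
    have := L1 0 ⟨le_refl 0, by norm_num⟩
    rw [Real.zero_rpow hα.ne'] at this
    apply this.congr
    intro n
    congr 2
    ring
  have Fb1 : Tendsto (fun n => F (b n)) atTop (𝓝 1) := by
    have h1 : Tendsto (fun n : ℕ => (1/(n:ℝ)) * ((n:ℝ) * (1 - F (b n)))) atTop (𝓝 0) := by
      have := tendsto_one_div_atTop_nhds_zero_nat.mul L0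
      simpa using this
    have h2 : Tendsto (fun n : ℕ => 1 - F (b n)) atTop (𝓝 0) := by
      apply h1.congr'
      filter_upwards [eventually_ge_atTop 1] with n hn
      have : (n:ℝ) ≠ 0 := by positivity
      field_simp
    have h3 : Tendsto (fun n : ℕ => 1 - (1 - F (b n))) atTop (𝓝 (1 - 0)) :=
      tendsto_const_nhds.sub h2
    simpa using h3
  -- limits along 2n and n+1
  have htwo : Tendsto (fun n : ℕ => 2*n) atTop atTop :=
    tendsto_atTop_mono (fun n => by simp [id]; omega) tendsto_id
  have hsucc : Tendsto (fun n : ℕ => n+1) atTop atTop :=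
    tendsto_atTop_mono (fun n => by simp [id]) tendsto_id
  have L2 : ∀ t ∈ Set.Ico (0:ℝ) 1,
      Tendsto (fun n : ℕ => (n:ℝ) * (1 - F (b (2*n) - a (2*n) * t))) atTop
        (𝓝 ((1/2) * t ^ α)) := by
    intro t ht
    have h1 := ((L1 t ht).comp htwo).const_mul (1/2 : ℝ)
    apply h1.congr
    intro n
    simp only [Function.comp]
    push_cast
    ring
  have Lsucc : ∀ t ∈ Set.Ico (0:ℝ) 1,
      Tendsto (fun n : ℕ => (n:ℝ) * (1 - F (b (n+1) - a (n+1) * t))) atTop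
        (𝓝 (1 * t ^ α)) := by
    intro t ht
    have hq : Tendsto (fun n : ℕ => (n:ℝ)/((n:ℝ)+1)) atTop (𝓝 1) := by
      have h0 : Tendsto (fun n : ℕ => 1 - 1/((n:ℝ)+1)) atTop (𝓝 (1 - 0)) :=
        tendsto_const_nhds.sub tendsto_one_div_add_atTop_nhds_zero_nat
      rw [sub_zero] at h0
      apply h0.congr
      intro n
      have : (n:ℝ) + 1 ≠ 0 := by positivity
      field_simp; ring
    have h1 := hq.mul ((L1 t ht).comp hsucc)
    apply h1.congr
    intro n
    simp only [Function.comp]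
    push_cast
    have : (n:ℝ) + 1 ≠ 0 := by positivity
    field_simp
  -- Khinchin comparisons
  have KH2 : ∀ ε : ℝ, 0 < ε → ∀ᶠ n in atTop,
      |a (2*n) - (1/2:ℝ) ^ α⁻¹ * a n| ≤ ε * a n ∧ |b (2*n) - b n| ≤ ε * a n :=
    fun ε hε => khinchin hmono hα hpos (fun n => 2*n) (by norm_num : (0:ℝ) < 1/2)
      (by norm_num) L1 L2 hε
  have KH1 : ∀ ε : ℝ, 0 < ε → ∀ᶠ n in atTop,
      |a (n+1) - a n| ≤ ε * a n ∧ |b (n+1) - b n| ≤ ε * a n := by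
    intro ε hε
    have := khinchin hmono hα hpos (fun n => n+1) one_pos (le_refl 1) L1 Lsucc hε
    simpa [Real.one_rpow] using this
  set c : ℝ := (1/2:ℝ) ^ α⁻¹ with hcdef
  have hc0 : 0 < c := Real.rpow_pos_of_pos (by norm_num) _
  have hc1 : c < 1 := Real.rpow_lt_one (by norm_num) (by norm_num) (by positivity)
  set ε₀ : ℝ := (1-c)/2 with hε₀def
  have hε₀ : 0 < ε₀ := by simp only [hε₀def]; linarith
  set κ : ℝ := c + ε₀ with hκdef
  have hκ0 : 0 ≤ κ := by simp only [hκdef]; linarith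
  have hκ1 : κ < 1 := by simp only [hκdef, hε₀def]; linarith
  have hκε : ∀ ε : ℝ, 0 < ε → ε ≤ ε₀ → ∃ N : ℕ, 1 ≤ N ∧ ∀ n, N ≤ n →
      (a (2*n) ≤ κ * a n ∧ |b (2*n) - b n| ≤ ε * a n) := by
    intro ε hε hεε
    obtain ⟨N, hN⟩ := (eventually_atTop).1 (KH2 ε hε)
    refine ⟨max N 1, le_max_right _ _, fun n hn => ?_⟩
    obtain ⟨h1, h2⟩ := hN n (le_trans (le_max_left _ _) hn)
    constructor
    · have := (abs_le.1 h1).2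
      have hap := hpos n
      simp only [hκdef]
      nlinarith
    · exact h2
  -- bounded above
  obtain ⟨N₁, hN₁1, hN₁⟩ := hκε ε₀ hε₀ (le_refl _)
  obtain ⟨L₀, _, _, hL₀F1, _⟩ := chain hpos hκ0 hκ1 hε₀.le hN₁ Fb1 hFle hmono N₁
    (le_refl _) hN₁1
  have hBdd : BddAbove {y : ℝ | F y < 1} := by
    refine ⟨L₀, fun y hy => ?_⟩
    by_contra hgt
    push_neg at hgt
    exact absurd (hL₀F1 y hgt) (ne_of_lt hy)
  refine ⟨hBdd, ?_⟩
  have Sne : {y : ℝ | F y < 1}.Nonempty := setne ⟨hmono, hrc, hbot, htop⟩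
  set ω : ℝ := sSup {y : ℝ | F y < 1} with hωdef
  -- eventually b m - a m / 2 ≤ ω
  have halfpt : ∀ᶠ m in atTop, b m - a m * (1/2) ≤ ω := by
    have hl := L1 (1/2) ⟨by norm_num, by norm_num⟩
    have hp : (0:ℝ) < (1/2:ℝ) ^ α := Real.rpow_pos_of_pos (by norm_num) _
    filter_upwards [hl.eventually_const_lt hp, eventually_ge_atTop 1] with m hm hm1
    have hmp : (0:ℝ) < m := by exact_mod_cast hm1
    have h1 : 0 < 1 - F (b m - a m * (1/2)) := by
      by_contra hle
      push_neg at hle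
      nlinarith
    exact le_csSup hBdd (by simp only [Set.mem_setOf_eq]; linarith)
  -- |b n - ω| small relative to a n
  have dsmall : ∀ ε' : ℝ, 0 < ε' → ∀ᶠ n in atTop, |b n - ω| ≤ ε' * a n := by
    intro ε' hε'
    set ε : ℝ := min ε₀ (ε' * (1-κ)) with hεdef
    have hε : 0 < ε := lt_min hε₀ (by nlinarith)
    obtain ⟨N₂, hN₂1, hN₂⟩ := hκε ε hε (min_le_left _ _)
    rw [eventually_atTop]
    refine ⟨N₂, fun n hn => ?_⟩
    obtain ⟨L, hLt, hLb, hLF1, hLa⟩ := chain hpos hκ0 hκ1 hε.le hN₂ Fb1 hFle hmono n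
      hn (le_trans hN₂1 hn)
    have hLω : L = ω := by
      have hle1 : ω ≤ L := csSup_le Sne fun y hy => by
        by_contra hgt
        push_neg at hgt
        exact absurd (hLF1 y hgt) (ne_of_lt hy)
      have hle2 : L ≤ ω := by
        have ht : Tendsto (fun k => b (2^k * n) - a (2^k * n) * (1/2)) atTop
            (𝓝 (L - 0 * (1/2))) := hLt.sub (hLa.mul_const _)
        rw [zero_mul, sub_zero] at ht
        have hsub : Tendsto (fun k : ℕ => 2^k * n) atTop atTop := by
          apply tendsto_atTop_mono (fun k => ?_) tendsto_id
          have h2 : k < 2^k := Nat.lt_two_pow_self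
          have h3 : 2^k ≤ 2^k * n := by
            calc 2^k = 2^k * 1 := by ring
            _ ≤ 2^k * n := Nat.mul_le_mul_left _ (le_trans hN₂1 hn)
          simp only [id]
          omega
        exact le_of_tendsto ht (hsub.eventually halfpt)
      linarith
    rw [hLω] at hLb
    have : ε / (1-κ) ≤ ε' := by
      rw [div_le_iff₀ (by linarith)]
      have := min_le_right ε₀ (ε' * (1-κ))
      simp only [hεdef] at *
      linarith [this]
    calc |b n - ω| ≤ ε * a n / (1-κ) := hLb
    _ = (ε / (1-κ)) * a n := by ring
    _ ≤ ε' * a n := mul_le_mul_of_nonneg_right this (hpos n).le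
  -- a n → 0
  set ε₁ : ℝ := (1-c)/4 with hε₁def
  have hε₁ : 0 < ε₁ := by simp only [hε₁def]; linarith
  have atendzero : Tendsto a atTop (𝓝 0) := by
    set κ' : ℝ := (1+ε₁) * (c+ε₁) with hκ'def
    have hκ'0 : 0 < κ' := by simp only [hκ'def]; nlinarith
    have hκ'1 : κ' < 1 := by simp only [hκ'def, hε₁def]; nlinarith
    have hdbl : ∀ᶠ n in atTop, a (2*n) ≤ (c+ε₁) * a n := by
      filter_upwards [KH2 ε₁ hε₁] with n hn
      have := (abs_le.1 hn.1).2
      linarith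
    have hcons : ∀ᶠ n in atTop, a (n+1) ≤ (1+ε₁) * a n := by
      filter_upwards [KH1 ε₁ hε₁] with n hn
      have := (abs_le.1 hn.1).2
      have hap := hpos n
      nlinarith
    obtain ⟨N₃, hN₃⟩ := eventually_atTop.1 (hdbl.and hcons)
    have halve : ∀ m, 2*N₃ ≤ m → a m ≤ κ' * a (m/2) := by
      intro m hm
      rcases Nat.even_or_odd m with ⟨q, hq⟩ | ⟨q, hq⟩
      · have hq2 : m = 2*q := by omega
        have hqN : N₃ ≤ q := by omega
        have hdiv : m/2 = q := by omega
        rw [hdiv, hq2]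
        have h1 := (hN₃ q hqN).1
        have h2 : (c+ε₁) ≤ κ' := by
          simp only [hκ'def]
          exact le_mul_of_one_le_left (by positivity) (by linarith)
        calc a (2*q) ≤ (c+ε₁) * a q := h1
        _ ≤ κ' * a q := mul_le_mul_of_nonneg_right h2 (hpos q).le
      · have hq2 : m = 2*q+1 := by omega
        have hqN : N₃ ≤ q := by omega
        have hq2N : N₃ ≤ 2*q := by omega
        have hdiv : m/2 = q := by omega
        rw [hdiv, hq2]
        have h1 := (hN₃ (2*q) hq2N).2
        have h2 := (hN₃ q hqN).1
        have h3 := hpos (2*q)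
        have h4 := hpos q
        calc a (2*q+1) ≤ (1+ε₁) * a (2*q) := h1
        _ ≤ (1+ε₁) * ((c+ε₁) * a q) :=
            mul_le_mul_of_nonneg_left h2 (by linarith)
        _ = κ' * a q := by simp only [hκ'def]; ring
    set M : ℝ := (Finset.Icc N₃ (2*N₃+1)).sup' (Finset.nonempty_Icc.2 (by omega)) a
      with hMdef
    have hM0 : 0 ≤ M := le_trans (hpos N₃).le
      (Finset.le_sup' a (Finset.mem_Icc.2 ⟨le_refl _, by omega⟩))
    have bound0 : ∀ m, N₃ ≤ m → a m ≤ M := by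
      intro m
      induction m using Nat.strong_induction_on with
      | _ m ih =>
        intro hm
        by_cases hm2 : m ≤ 2*N₃+1
        · exact Finset.le_sup' a (Finset.mem_Icc.2 ⟨hm, hm2⟩)
        · push_neg at hm2
          have h1 : 2*N₃ ≤ m := by omega
          have h2 := halve m h1
          have h3 : a (m/2) ≤ M := ih (m/2) (by omega) (by omega)
          have h4 := hpos (m/2)
          calc a m ≤ κ' * a (m/2) := h2
          _ ≤ 1 * a (m/2) := mul_le_mul_of_nonneg_right hκ'1.le h4.le
          _ = a (m/2) := one_mul _
          _ ≤ M := h3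
    have boundj : ∀ j m, N₃ * 2^j ≤ m → a m ≤ κ'^j * M := by
      intro j
      induction j with
      | zero => intro m hm; simpa using bound0 m (by simpa using hm)
      | succ j ih =>
        intro m hm
        have hm2 : 2*N₃ ≤ m := by
          have h1 : 2 ≤ 2^(j+1) := by
            calc 2 = 2^1 := by norm_num
            _ ≤ 2^(j+1) := Nat.pow_le_pow_right (by norm_num) (by omega)
          calc 2*N₃ = N₃*2 := by ring
          _ ≤ N₃*2^(j+1) := Nat.mul_le_mul_left _ h1
          _ ≤ m := hm
        have hdivge : N₃ * 2^j ≤ m/2 := by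
          rw [Nat.le_div_iff_mul_le (by norm_num)]
          calc N₃ * 2^j * 2 = N₃ * 2^(j+1) := by ring
          _ ≤ m := hm
        calc a m ≤ κ' * a (m/2) := halve m hm2
        _ ≤ κ' * (κ'^j * M) := mul_le_mul_of_nonneg_left (ih _ hdivge) hκ'0.le
        _ = κ'^(j+1) * M := by ring
    rw [Metric.tendsto_atTop]
    intro εm hεm
    have htend : Tendsto (fun j : ℕ => κ'^j * M) atTop (𝓝 0) := by
      have := (tendsto_pow_atTop_nhds_zero_of_lt_one hκ'0.le hκ'1).mul_const M
      simpa using this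
    obtain ⟨j, hj⟩ := (htend.eventually_lt_const hεm).exists
    refine ⟨N₃ * 2^j, fun m hm => ?_⟩
    rw [Real.dist_eq, sub_zero, abs_of_pos (hpos m)]
    exact lt_of_le_of_lt (boundj j m hm) hj
  -- b n → ω
  have btendω : Tendsto b atTop (𝓝 ω) := by
    have h1 : Tendsto (fun n => b n - ω) atTop (𝓝 0) := by
      apply squeeze_zero_norm' _ atendzero
      filter_upwards [dsmall 1 one_pos] with n hn
      simpa using hn
    have := h1.add_const ω
    simpa using this
  -- the tail function U and shift d
  set U : ℝ → ℝ := fun s => 1 - F (ω - s) with hUdef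
  have Umono : Monotone U := fun s₁ s₂ hle => by
    simp only [hUdef]
    have := hmono (show ω - s₂ ≤ ω - s₁ by linarith)
    linarith
  have Unonneg : ∀ s, 0 ≤ U s := fun s => by
    simp only [hUdef]; linarith [hFle (ω - s)]
  set d : ℕ → ℝ := fun n => ω - b n with hddef
  have LU : ∀ t ∈ Set.Ico (0:ℝ) 1,
      Tendsto (fun n : ℕ => (n:ℝ) * U (d n + a n * t)) atTop (𝓝 (t ^ α)) := by
    intro t ht
    apply (L1 t ht).congr
    intro n
    have harg : ω - (d n + a n * t) = b n - a n * t := by simp only [hddef]; ring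
    simp only [hUdef, harg]
  have LU1 : ∀ t ∈ Set.Ico (0:ℝ) 1,
      Tendsto (fun n : ℕ => ((n:ℝ)+1) * U (d n + a n * t)) atTop (𝓝 (t ^ α)) := by
    intro t ht
    have hq : Tendsto (fun n : ℕ => ((n:ℝ)+1)/(n:ℝ)) atTop (𝓝 1) := by
      have h0 : Tendsto (fun n : ℕ => 1 + 1/(n:ℝ)) atTop (𝓝 (1+0)) :=
        tendsto_const_nhds.add tendsto_one_div_atTop_nhds_zero_nat
      rw [add_zero] at h0
      apply h0.congr'
      filter_upwards [eventually_ge_atTop 1] with n hn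
      have hnp : (n:ℝ) ≠ 0 := by positivity
      field_simp
    have h1 := hq.mul (LU t ht)
    rw [one_mul] at h1
    apply h1.congr'
    filter_upwards [eventually_ge_atTop 1] with n hn
    have hnp : (n:ℝ) ≠ 0 := by positivity
    field_simp
  have doa : ∀ ε' : ℝ, 0 < ε' → ∀ᶠ n in atTop, |d n| ≤ ε' * a n := by
    intro ε' hε'
    filter_upwards [dsmall ε' hε'] with n hn
    simpa only [hddef, abs_sub_comm] using hn
  have dtend0 : Tendsto d atTop (𝓝 0) := by
    have := (tendsto_const_nhds (x := ω) (f := atTop (α := ℕ))).sub btendω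
    simpa [hddef] using this
  have hUapp : ∀ s, U s = 1 - F (ω - s) := fun s => rfl
  clear_value U d ω κ ε₀ ε₁ c
  -- the regular variation property
  intro x hx
  set t₀ : ℝ := min (1/2) (1/(2*x)) with ht₀def
  have ht₀0 : 0 < t₀ := lt_min (by norm_num) (by positivity)
  have ht₀h : t₀ ≤ 1/2 := min_le_left _ _
  have hxt₀ : 0 < x * t₀ := mul_pos hx ht₀0
  have hxt₀half : x * t₀ ≤ 1/2 := by
    have h1 : t₀ ≤ 1/(2*x) := min_le_right _ _
    calc x * t₀ ≤ x * (1/(2*x)) := mul_le_mul_of_nonneg_left h1 hx.le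
    _ = 1/2 := by field_simp
  have ht₀α : 0 < t₀ ^ α := Real.rpow_pos_of_pos ht₀0 _
  clear_value t₀
  -- the counting function
  have hseqpos_ev : ∀ᶠ n in atTop, 0 < d n + a n * t₀ := by
    filter_upwards [doa (t₀/2) (half_pos ht₀0)] with n hn
    have h1 := (abs_le.1 hn).1
    have h2 : 0 < a n * t₀ := mul_pos (hpos n) ht₀0
    linarith
  obtain ⟨Nstar, hNstar⟩ := eventually_atTop.1 hseqpos_ev
  have hseqT0 : Tendsto (fun n => d n + a n * t₀) atTop (𝓝 0) := by
    have := dtend0.add (atendzero.mul_const t₀)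
    simpa using this
  set m : ℝ → ℕ := fun h' => sInf {n | Nstar ≤ n ∧ d n + a n * t₀ ≤ h'} with hmdef
  have hmsetne : ∀ h' : ℝ, 0 < h' → {n | Nstar ≤ n ∧ d n + a n * t₀ ≤ h'}.Nonempty := by
    intro h' hh'
    obtain ⟨n, hn1, hn2⟩ :=
      ((eventually_ge_atTop Nstar).and ((hseqT0.eventually_lt_const hh'))).exists
    exact ⟨n, hn1, hn2.le⟩
  have hmmem : ∀ h' : ℝ, 0 < h' → Nstar ≤ m h' ∧ d (m h') + a (m h') * t₀ ≤ h' :=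
    fun h' hh' => Nat.sInf_mem (hmsetne h' hh')
  have hmpred : ∀ h' : ℝ, 0 < h' → ∀ k, Nstar ≤ k → k < m h' → h' < d k + a k * t₀ := by
    intro h' hh' k hk1 hk2
    have := Nat.notMem_of_lt_sInf (hmdef ▸ hk2)
    simp only [Set.mem_setOf_eq, not_and, not_le] at this
    exact this hk1
  have mtendsto : Tendsto m (𝓝[>] (0:ℝ)) atTop := by
    rw [tendsto_atTop]
    intro K
    set K' := max K Nstar with hK'def
    have hne : (Finset.Icc Nstar K').Nonempty := Finset.nonempty_Icc.2 (le_max_right _ _)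
    set δ := (Finset.Icc Nstar K').inf' hne (fun n => d n + a n * t₀) with hδdef
    have hδ0 : 0 < δ := (Finset.lt_inf'_iff hne).2
      fun i hi => hNstar i (Finset.mem_Icc.1 hi).1
    filter_upwards [Ioo_mem_nhdsGT_of_mem (Set.left_mem_Ico.2 hδ0)] with h' hh'
    by_contra hlt
    push_neg at hlt
    have h1 := hmmem h' hh'.1
    have h2 : m h' ≤ K' := le_trans hlt.le (le_max_left _ _)
    have h3 : δ ≤ d (m h') + a (m h') * t₀ :=
      Finset.inf'_le _ (Finset.mem_Icc.2 ⟨h1.1, h2⟩)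
    linarith [h1.2, hh'.2]
  have m1tendsto : Tendsto (fun h' => m h' - 1) (𝓝[>] (0:ℝ)) atTop := by
    rw [tendsto_atTop]
    intro K
    filter_upwards [(tendsto_atTop.1 mtendsto) (K+1)] with h' hh'
    omega
  rw [Metric.tendsto_nhds]
  intro η hη
  -- choice of ε
  have hcont5 : ContinuousAt (fun ε : ℝ => ((x*t₀+ε)^α + ε)/(t₀^α - ε)) 0 := by
    apply ContinuousAt.div
    · exact (((continuous_const.add continuous_id).continuousAt).rpow_const
        (Or.inl (by simpa using hxt₀.ne'))).add continuous_id.continuousAt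
    · exact (continuous_const.sub continuous_id).continuousAt
    · simpa using ht₀α.ne'
  have hcont6 : ContinuousAt (fun ε : ℝ => ((x*t₀-ε)^α - ε)/(t₀^α + ε)) 0 := by
    apply ContinuousAt.div
    · exact (((continuous_const.sub continuous_id).continuousAt).rpow_const
        (Or.inl (by simpa using hxt₀.ne'))).sub continuous_id.continuousAt
    · exact (continuous_const.add continuous_id).continuousAt
    · simpa using ht₀α.ne'
  have hval : (x*t₀)^α / t₀^α = x^α := by
    rw [Real.mul_rpow hx.le ht₀0.le, mul_div_assoc, div_self ht₀α.ne', mul_one]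
  have hev : ∀ᶠ ε in 𝓝[>] (0:ℝ),
      (0 < ε ∧ ε < x*t₀ ∧ x*t₀+ε < 1 ∧ ε < t₀^α) ∧
      ((x*t₀+ε)^α + ε)/(t₀^α - ε) < x^α + η ∧
      x^α - η < ((x*t₀-ε)^α - ε)/(t₀^α + ε) := by
    have e1 : ∀ᶠ ε in 𝓝[>] (0:ℝ), 0 < ε := self_mem_nhdsWithin
    have e2 : ∀ᶠ ε in 𝓝[>] (0:ℝ), ε < x*t₀ :=
      eventually_nhdsWithin_of_eventually_nhds
        (eventually_of_mem (Iio_mem_nhds hxt₀) fun y hy => hy)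
    have e3 : ∀ᶠ ε in 𝓝[>] (0:ℝ), ε < 1 - x*t₀ :=
      eventually_nhdsWithin_of_eventually_nhds
        (eventually_of_mem (Iio_mem_nhds (by linarith : (0:ℝ) < 1 - x*t₀)) fun y hy => hy)
    have e4 : ∀ᶠ ε in 𝓝[>] (0:ℝ), ε < t₀^α :=
      eventually_nhdsWithin_of_eventually_nhds
        (eventually_of_mem (Iio_mem_nhds ht₀α) fun y hy => hy)
    have e5 : ∀ᶠ ε in 𝓝[>] (0:ℝ), ((x*t₀+ε)^α + ε)/(t₀^α - ε) < x^α + η := by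
      apply eventually_nhdsWithin_of_eventually_nhds
      have hv : ((x*t₀+(0:ℝ))^α + 0)/(t₀^α - 0) = x^α := by
        rw [add_zero, add_zero, sub_zero, hval]
      have := hcont5.tendsto
      rw [hv] at this
      exact this.eventually_lt_const (by linarith)
    have e6 : ∀ᶠ ε in 𝓝[>] (0:ℝ), x^α - η < ((x*t₀-ε)^α - ε)/(t₀^α + ε) := by
      apply eventually_nhdsWithin_of_eventually_nhds
      have hv : ((x*t₀-(0:ℝ))^α - 0)/(t₀^α + 0) = x^α := by
        rw [add_zero, sub_zero, sub_zero, hval]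
      have := hcont6.tendsto
      rw [hv] at this
      exact this.eventually_const_lt (by linarith)
    filter_upwards [e1, e2, e3, e4, e5, e6] with ε he1 he2 he3 he4 he5 he6
    exact ⟨⟨he1, he2, by linarith, he4⟩, he5, he6⟩
  obtain ⟨ε, ⟨hε0, hε1, hε2, hε3⟩, h5, h6⟩ := hev.exists
  -- membership of the three scales
  have hmem1 : x*t₀ - ε ∈ Set.Ico (0:ℝ) 1 := ⟨by linarith, by linarith⟩
  have hmem2 : x*t₀ + ε ∈ Set.Ico (0:ℝ) 1 := ⟨by linarith, by linarith⟩
  have hmem3 : t₀ ∈ Set.Ico (0:ℝ) 1 := ⟨ht₀0.le, by linarith⟩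
  -- the eventual index properties
  have Pev : ∀ᶠ n in atTop, (|d n| * |x - 1| ≤ ε * a n) ∧
      ((x*t₀ - ε)^α - ε < (n:ℝ) * U (d n + a n * (x*t₀ - ε))) ∧
      (t₀^α - ε < (n:ℝ) * U (d n + a n * t₀)) ∧
      (((n:ℝ)+1) * U (d n + a n * (x*t₀ + ε)) < (x*t₀+ε)^α + ε) ∧
      (((n:ℝ)+1) * U (d n + a n * t₀) < t₀^α + ε) ∧ 1 ≤ n := by
    have habs : (0:ℝ) < |x-1| + 1 := by positivity
    have e1 := doa (ε/(|x-1|+1)) (by positivity)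
    have e2 := (LU _ hmem1).eventually_const_lt
      (by linarith : (x*t₀-ε)^α - ε < (x*t₀-ε)^α)
    have e3 := (LU _ hmem3).eventually_const_lt (by linarith : t₀^α - ε < t₀^α)
    have e4 := (LU1 _ hmem2).eventually_lt_const
      (by linarith : (x*t₀+ε)^α < (x*t₀+ε)^α + ε)
    have e5 := (LU1 _ hmem3).eventually_lt_const (by linarith : t₀^α < t₀^α + ε)
    filter_upwards [e1, e2, e3, e4, e5, eventually_ge_atTop 1]
      with n he1 he2 he3 he4 he5 he6
    refine ⟨?_, he2, he3, he4, he5, he6⟩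
    calc |d n| * |x-1| ≤ (ε/(|x-1|+1) * a n) * |x-1| :=
          mul_le_mul_of_nonneg_right he1 (abs_nonneg _)
    _ = (ε * a n) * (|x-1|/(|x-1|+1)) := by ring
    _ ≤ (ε * a n) * 1 := by
        apply mul_le_mul_of_nonneg_left
        · rw [div_le_one habs]; linarith
        · exact mul_nonneg hε0.le (hpos n).le
    _ = ε * a n := mul_one _
  have hNs0 : 0 < d Nstar + a Nstar * t₀ := hNstar Nstar (le_refl _)
  filter_upwards [mtendsto.eventually Pev, m1tendsto.eventually Pev,
    (tendsto_atTop.1 mtendsto) (Nstar+1), self_mem_nhdsWithin] with h' P1 P2 hm1 hh'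
  have hh'0 : (0:ℝ) < h' := hh'
  set n : ℕ := m h' with hndef
  set k : ℕ := m h' - 1 with hkdef
  have hkn : k + 1 = n := by omega
  have hkNs : Nstar ≤ k := by omega
  have hkltn : k < n := by omega
  obtain ⟨p1, p2, p3, -, -, hn1⟩ := P1
  obtain ⟨q1, -, -, q2, q3, -⟩ := P2
  have np : (0:ℝ) < (n:ℝ) := by exact_mod_cast Nat.lt_of_lt_of_le (by omega) hm1
  have hkcast : ((k:ℝ)+1) = (n:ℝ) := by exact_mod_cast congrArg (Nat.cast : ℕ → ℝ) hkn
  have hs1 : d n + a n * t₀ ≤ h' := (hmmem h' hh'0).2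
  have hs2 : h' < d k + a k * t₀ := hmpred h' hh'0 k hkNs hkltn
  -- denominator bounds
  have den_lb : t₀^α - ε < (n:ℝ) * U h' := by
    calc t₀^α - ε < (n:ℝ) * U (d n + a n * t₀) := p3
    _ ≤ (n:ℝ) * U h' := mul_le_mul_of_nonneg_left (Umono hs1) np.le
  have den_ub : (n:ℝ) * U h' < t₀^α + ε := by
    calc (n:ℝ) * U h' ≤ (n:ℝ) * U (d k + a k * t₀) :=
          mul_le_mul_of_nonneg_left (Umono hs2.le) np.le
    _ = ((k:ℝ)+1) * U (d k + a k * t₀) := by rw [hkcast]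
    _ < t₀^α + ε := q3
  -- numerator bounds
  have num_ub : (n:ℝ) * U (x * h') < (x*t₀+ε)^α + ε := by
    have harg : x * h' ≤ d k + a k * (x*t₀ + ε) := by
      have hq1' : (x-1) * d k ≤ ε * a k := by
        calc (x-1) * d k ≤ |(x-1) * d k| := le_abs_self _
        _ = |d k| * |x-1| := by rw [abs_mul]; ring
        _ ≤ ε * a k := q1
      have h1 : x * h' ≤ x * (d k + a k * t₀) := mul_le_mul_of_nonneg_left hs2.le hx.le
      have h2 : x * (d k + a k * t₀) ≤ d k + a k * (x*t₀ + ε) := by nlinarith [hq1']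
      linarith
    calc (n:ℝ) * U (x * h') ≤ (n:ℝ) * U (d k + a k * (x*t₀ + ε)) :=
          mul_le_mul_of_nonneg_left (Umono harg) np.le
    _ = ((k:ℝ)+1) * U (d k + a k * (x*t₀ + ε)) := by rw [hkcast]
    _ < (x*t₀+ε)^α + ε := q2
  have num_lb : (x*t₀-ε)^α - ε < (n:ℝ) * U (x * h') := by
    have harg : d n + a n * (x*t₀ - ε) ≤ x * h' := by
      have hp1' : -(ε * a n) ≤ (x-1) * d n := by
        calc -(ε * a n) ≤ -(|d n| * |x-1|) := by linarith [p1]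
        _ = -|(x-1) * d n| := by rw [abs_mul]; ring_nf
        _ ≤ (x-1) * d n := neg_abs_le _
      have h1 : x * (d n + a n * t₀) ≤ x * h' := mul_le_mul_of_nonneg_left hs1 hx.le
      have h2 : d n + a n * (x*t₀ - ε) ≤ x * (d n + a n * t₀) := by nlinarith [hp1']
      linarith
    calc (x*t₀-ε)^α - ε < (n:ℝ) * U (d n + a n * (x*t₀ - ε)) := p2
    _ ≤ (n:ℝ) * U (x * h') := mul_le_mul_of_nonneg_left (Umono harg) np.le
  have Uh'pos : 0 < U h' := by
    by_contra hle
    push_neg at hle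
    have : (n:ℝ) * U h' ≤ 0 := mul_nonpos_of_nonneg_of_nonpos np.le hle
    linarith
  -- conclusion
  have hratio : (1 - F (ω - x * h')) / (1 - F (ω - h'))
      = ((n:ℝ) * U (x * h')) / ((n:ℝ) * U h') := by
    rw [mul_div_mul_left _ _ np.ne', hUapp, hUapp]
  rw [hratio, Real.dist_eq, abs_lt]
  have hub : ((n:ℝ) * U (x * h')) / ((n:ℝ) * U h') < x^α + η := by
    calc ((n:ℝ) * U (x * h')) / ((n:ℝ) * U h')
        ≤ ((x*t₀+ε)^α + ε)/(t₀^α - ε) := by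
          apply div_le_div₀ (by positivity) num_ub.le (by linarith) den_lb.le
    _ < x^α + η := h5
  have hlb : x^α - η < ((n:ℝ) * U (x * h')) / ((n:ℝ) * U h') := by
    calc x^α - η < ((x*t₀-ε)^α - ε)/(t₀^α + ε) := h6
    _ ≤ ((n:ℝ) * U (x * h')) / ((n:ℝ) * U h') := by
          apply div_le_div₀ (mul_nonneg np.le (Unonneg _)) num_lb.le
            (mul_pos np Uh'pos) den_ub.le
  constructor <;> linarith

lemma sufficiency (F : ℝ → ℝ) (hF : IsDistFun F) (α : ℝ) (hα : 0 < α)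
    (hB : BddAbove {y : ℝ | F y < 1})
    (hRV : ∀ x : ℝ, 0 < x →
      Tendsto (fun h => (1 - F (sSup {y : ℝ | F y < 1} - x * h)) /
          (1 - F (sSup {y : ℝ | F y < 1} - h))) (𝓝[>] (0 : ℝ)) (𝓝 (x ^ α))) :
    ∃ a b : ℕ → ℝ, (∀ n, 0 < a n) ∧
      ∀ x : ℝ, Tendsto (fun n => freePow F n (a n * x + b n)) atTop
        (𝓝 (betaDF α x)) := by
  obtain ⟨hmono, hrc, hbot, htop⟩ := hF
  set S := {y : ℝ | F y < 1} with hS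
  set ω := sSup S with hω
  have Sne : S.Nonempty := setne ⟨hmono, hrc, hbot, htop⟩
  -- F = 1 above ω
  have A1 : ∀ y, ω < y → F y = 1 := by
    intro y hy
    by_contra hne
    have : F y < 1 := lt_of_le_of_ne (F_le_one ⟨hmono, hrc, hbot, htop⟩ y) hne
    exact absurd (le_csSup hB this) (not_le.2 hy)
  have A2 : F ω = 1 := by
    have h1 : Tendsto F (𝓝[>] ω) (𝓝 (F ω)) :=
      (hrc ω).mono_left (nhdsWithin_mono _ Set.Ioi_subset_Ici_self)
    have h2 : Tendsto F (𝓝[>] ω) (𝓝 1) := by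
      apply Tendsto.congr' _ tendsto_const_nhds
      filter_upwards [self_mem_nhdsWithin] with y hy
      exact (A1 y hy).symm
    exact tendsto_nhds_unique h1 h2
  have A3 : ∀ h : ℝ, 0 < h → F (ω - h) < 1 := by
    intro h hh
    obtain ⟨z, hz, hlt⟩ := exists_lt_of_lt_csSup Sne (show ω - h < ω by linarith)
    exact lt_of_le_of_lt (hmono hlt.le) hz
  set U : ℝ → ℝ := fun h => 1 - F (ω - h) with hU
  have Umono : Monotone U := fun h₁ h₂ hle => by
    simp only [hU]
    have := hmono (show ω - h₂ ≤ ω - h₁ by linarith)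
    linarith
  have Upos : ∀ h : ℝ, 0 < h → 0 < U h := fun h hh => by
    simp only [hU]; linarith [A3 h hh]
  have Unonneg : ∀ h : ℝ, 0 ≤ U h := fun h => by
    simp only [hU]; linarith [F_le_one ⟨hmono, hrc, hbot, htop⟩ (ω - h)]
  -- limit of U at 0+
  set c := sInf (U '' Set.Ioi 0) with hc
  have imne : (U '' Set.Ioi 0).Nonempty := ⟨U 1, 1, by norm_num, rfl⟩
  have imbdd : BddBelow (U '' Set.Ioi 0) := ⟨0, fun u ⟨h, _, he⟩ => he ▸ Unonneg h⟩
  have cnonneg : 0 ≤ c := le_csInf imne fun u ⟨h, _, he⟩ => he ▸ Unonneg h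
  have Utendc : Tendsto U (𝓝[>] (0:ℝ)) (𝓝 c) := by
    rw [Metric.tendsto_nhdsWithin_nhds]
    intro ε hε
    obtain ⟨u, ⟨h₀, h₀pos, he⟩, hu⟩ := exists_lt_of_csInf_lt imne (lt_add_of_pos_right c hε)
    refine ⟨h₀, h₀pos, fun {x} hx hd => ?_⟩
    have hx0 : (0:ℝ) < x := hx
    have hxh : x < h₀ := by
      rw [Real.dist_eq, sub_zero, abs_of_pos hx0] at hd; exact hd
    have hle : U x ≤ U h₀ := Umono hxh.le
    have hge : c ≤ U x := csInf_le imbdd ⟨x, hx0, rfl⟩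
    rw [Real.dist_eq, abs_lt]
    constructor <;> [linarith; linarith [he ▸ hu]]
  have czero : c = 0 := by
    by_contra hne
    have hcpos : 0 < c := lt_of_le_of_ne cnonneg (Ne.symm hne)
    have hmap : Tendsto (fun h : ℝ => 2 * h) (𝓝[>] (0:ℝ)) (𝓝[>] (0:ℝ)) := by
      apply tendsto_nhdsWithin_of_tendsto_nhds_of_eventually_within
      · have : Tendsto (fun h : ℝ => 2 * h) (𝓝 (0:ℝ)) (𝓝 (2 * 0)) :=
          (continuous_const.mul continuous_id).tendsto 0
        simpa using this.mono_left nhdsWithin_le_nhds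
      · filter_upwards [self_mem_nhdsWithin] with h hh
        exact Set.mem_Ioi.2 (mul_pos two_pos hh)
    have h2 : Tendsto (fun h => U (2 * h) / U h) (𝓝[>] (0:ℝ)) (𝓝 (c / c)) :=
      (Utendc.comp hmap).div Utendc hne
    have h3 := hRV 2 (by norm_num)
    have : (2:ℝ) ^ α = c / c := tendsto_nhds_unique h3 h2
    rw [div_self hne] at this
    have : (1:ℝ) < 2 ^ α := Real.one_lt_rpow_iff_of_pos (by norm_num) |>.2 (Or.inl ⟨by norm_num, hα⟩)
    linarith [this, ‹(2:ℝ) ^ α = 1›]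
  rw [czero] at Utendc
  -- definition of a
  set T : ℕ → Set ℝ := fun n => {h | 0 < h ∧ 1 / (n:ℝ) ≤ U h} with hT
  set a : ℕ → ℝ := fun n => if 2 ≤ n then sInf (T n) else 1 with ha
  have Tbdd : ∀ n, BddBelow (T n) := fun n => ⟨0, fun h hh => hh.1.le⟩
  have Tne : ∀ n : ℕ, 2 ≤ n → (T n).Nonempty := by
    intro n hn
    have : ∀ᶠ y in atBot, F y < 1/2 := hbot.eventually_lt_const (by norm_num)
    obtain ⟨y₀, hy₀, hylt⟩ := (this.and (eventually_le_atBot (ω - 1))).exists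
    refine ⟨ω - y₀, by linarith [hylt], ?_⟩
    have : U (ω - y₀) = 1 - F y₀ := by simp [hU]
    rw [this]
    have h1 : (1:ℝ)/(n:ℝ) ≤ 1/2 := by
      apply one_div_le_one_div_of_le; norm_num
      exact_mod_cast hn
    linarith
  have apos : ∀ n, 0 < a n := by
    intro n
    by_cases hn : 2 ≤ n
    · simp only [ha, if_pos hn]
      have hn' : (0:ℝ) < 1/(n:ℝ) := by positivity
      have hev := Utendc.eventually_lt_const hn'
      rw [eventually_nhdsWithin_iff, Metric.eventually_nhds_iff] at hev
      obtain ⟨δ, hδ, hδp⟩ := hev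
      refine lt_of_lt_of_le hδ (le_csInf (Tne n hn) fun h hh => ?_)
      by_contra hlt
      push_neg at hlt
      have : U h < 1/(n:ℝ) := hδp (by rw [Real.dist_eq, sub_zero, abs_of_pos hh.1]; exact hlt) hh.1
      exact absurd hh.2 (not_le.2 this)
    · simp only [ha, if_neg hn]; norm_num
  have aU_le : ∀ n : ℕ, 2 ≤ n → U (a n) ≤ 1/(n:ℝ) := by
    intro n hn
    have hcw : ContinuousWithinAt U (Set.Iic (a n)) (a n) := by
      have h1 : ContinuousWithinAt (fun y => 1 - F y) (Set.Ici (ω - a n)) (ω - a n) :=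
        (continuousWithinAt_const.sub (hrc (ω - a n)))
      have h2 : ContinuousWithinAt (fun h : ℝ => ω - h) (Set.Iic (a n)) (a n) :=
        (continuous_const.sub continuous_id).continuousWithinAt
      have h3 : Set.MapsTo (fun h : ℝ => ω - h) (Set.Iic (a n)) (Set.Ici (ω - a n)) :=
        fun h hh => by simp at hh ⊢; linarith
      exact h1.comp h2 h3
    have htend : Tendsto U (𝓝[<] (a n)) (𝓝 (U (a n))) :=
      hcw.mono_left (nhdsWithin_mono _ Set.Iio_subset_Iic_self)
    refine le_of_tendsto htend ?_
    filter_upwards [Ioo_mem_nhdsLT_of_mem ⟨apos n, le_refl _⟩] with h hh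
    have : h ∉ T n := fun hmem => by
      have : a n ≤ h := by
        simp only [ha, if_pos hn]; exact csInf_le (Tbdd n) hmem
      linarith [hh.2]
    simp only [hT, Set.mem_setOf_eq, not_and, not_le] at this
    exact (this hh.1).le
  have aU_ge : ∀ n : ℕ, 2 ≤ n → ∀ ρ : ℝ, 1 < ρ → 1/(n:ℝ) ≤ U (ρ * a n) := by
    intro n hn ρ hρ
    have h1 : sInf (T n) < ρ * a n := by
      have : a n = sInf (T n) := by simp only [ha, if_pos hn]
      rw [← this]
      nlinarith [apos n]
    obtain ⟨h, hh, hlt⟩ := exists_lt_of_csInf_lt (Tne n hn) h1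
    exact le_trans hh.2 (Umono hlt.le)
  have atend : Tendsto a atTop (𝓝 (0:ℝ)) := by
    rw [Metric.tendsto_atTop]
    intro ε hε
    have hU2 : 0 < U (ε/2) := Upos _ (by positivity)
    obtain ⟨N, hN⟩ := exists_nat_gt (max 2 (1 / U (ε/2)))
    refine ⟨N, fun n hn => ?_⟩
    have hn2 : 2 ≤ n := by
      have : (2:ℝ) ≤ max 2 (1 / U (ε/2)) := le_max_left _ _
      have : (2:ℝ) < n := lt_of_le_of_lt this (lt_of_lt_of_le hN (by exact_mod_cast hn))
      exact_mod_cast this.le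
    have hmem : ε/2 ∈ T n := by
      refine ⟨by positivity, ?_⟩
      have h1 : 1 / U (ε/2) < (n:ℝ) :=
        lt_of_le_of_lt (le_max_right _ _) (lt_of_lt_of_le hN (by exact_mod_cast hn))
      rw [div_le_iff₀ (by positivity : (0:ℝ) < (n:ℝ))]
      rw [div_lt_iff₀ hU2] at h1
      linarith
    have : a n ≤ ε/2 := by
      simp only [ha, if_pos hn2]; exact csInf_le (Tbdd n) hmem
    rw [Real.dist_eq, sub_zero, abs_of_pos (apos n)]
    linarith
  have atend' : Tendsto a atTop (𝓝[>] (0:ℝ)) :=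
    tendsto_nhdsWithin_of_tendsto_nhds_of_eventually_within _ atend
      (Eventually.of_forall fun n => apos n)
  -- n * U (a n) → 1
  have nUa1 : Tendsto (fun n : ℕ => (n:ℝ) * U (a n)) atTop (𝓝 1) := by
    rw [tendsto_order]
    constructor
    · intro l hl
      rcases le_or_gt l 0 with hl0 | hl0
      · filter_upwards [eventually_ge_atTop 2] with n hn
        have := Upos (a n) (apos n)
        have hn0 : (0:ℝ) < n := by positivity
        nlinarith
      · set θ := (l+1)/2 with hθ
        have hθ1 : θ < 1 := by simp only [hθ]; linarith
        have hθ0 : 0 < θ := by simp only [hθ]; linarith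
        have hρex : ∃ ρ : ℝ, 1 < ρ ∧ ρ ^ α < 1/θ := by
          have hcont : ContinuousAt (fun ρ : ℝ => ρ ^ α) 1 :=
            Real.continuousAt_rpow_const 1 α (Or.inl one_ne_zero)
          have h1 : (1:ℝ) ^ α = 1 := Real.one_rpow α
          have : ∀ᶠ ρ in 𝓝[>] (1:ℝ), (fun ρ : ℝ => ρ ^ α) ρ < 1/θ := by
            apply ((hcont.tendsto.mono_left nhdsWithin_le_nhds)).eventually_lt_const
            rw [h1]
            rw [lt_div_iff₀ hθ0]; linarith
          obtain ⟨ρ, hρ1, hρ2⟩ := (this.and self_mem_nhdsWithin).exists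
          exact ⟨ρ, hρ2, hρ1⟩
        obtain ⟨ρ, hρ1, hρα⟩ := hρex
        have hratio : Tendsto (fun n => U (ρ * a n) / U (a n)) atTop (𝓝 (ρ ^ α)) :=
          (hRV ρ (by linarith)).comp atend'
        filter_upwards [hratio.eventually_lt_const hρα, eventually_ge_atTop 2] with n hrn hn2
        have hUa : 0 < U (a n) := Upos _ (apos n)
        have hna : (0:ℝ) < n := by positivity
        have h1 : 1/(n:ℝ) ≤ U (ρ * a n) := aU_ge n hn2 ρ hρ1
        rw [div_lt_div_iff₀ hUa hθ0] at hrn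
        rw [div_le_iff₀ hna] at h1
        have h4 : θ ≤ (n:ℝ) * (U (ρ * a n) * θ) := by nlinarith
        have h5 : (n:ℝ) * (U (ρ * a n) * θ) < (n:ℝ) * U (a n) := by nlinarith
        have : θ < (n:ℝ) * U (a n) := lt_of_le_of_lt h4 h5
        have hlθ : l < θ := by simp only [hθ]; linarith
        linarith
    · intro u hu
      filter_upwards [eventually_ge_atTop 2] with n hn
      have h1 : U (a n) ≤ 1/(n:ℝ) := aU_le n hn
      have hna : (0:ℝ) < n := by positivity
      have : (n:ℝ) * U (a n) ≤ 1 := by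
        rw [← mul_one_div_cancel hna.ne']
        exact mul_le_mul_of_nonneg_left h1 hna.le
      linarith
  -- n * U (x * a n) → x ^ α for x > 0
  have nUax : ∀ x : ℝ, 0 < x →
      Tendsto (fun n : ℕ => (n:ℝ) * U (x * a n)) atTop (𝓝 (x ^ α)) := by
    intro x hx
    have hratio : Tendsto (fun n => U (x * a n) / U (a n)) atTop (𝓝 (x ^ α)) :=
      (hRV x hx).comp atend'
    have hprod := nUa1.mul hratio
    rw [one_mul] at hprod
    apply hprod.congr'
    filter_upwards [eventually_ge_atTop 1] with n hn
    have hUa : U (a n) ≠ 0 := (Upos _ (apos n)).ne'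
    field_simp
  -- conclude
  refine ⟨a, fun _ => ω, apos, fun x => ?_⟩
  rcases lt_trichotomy x 0 with hx | hx | hx
  · -- x < 0
    have hkey : ∀ n : ℕ, freePow F n (a n * x + ω) = max (1 - (n:ℝ) * U ((-x) * a n)) 0 := by
      intro n
      have harg : ω - (-x) * a n = a n * x + ω := by ring
      have : (n:ℝ) * F (a n * x + ω) - ((n:ℝ) - 1) = 1 - (n:ℝ) * U ((-x) * a n) := by
        simp only [hU, harg]; ring
      rw [freePow, this]
    have hlim : Tendsto (fun n : ℕ => max (1 - (n:ℝ) * U ((-x) * a n)) 0) atTop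
        (𝓝 (max (1 - (-x) ^ α) 0)) := by
      have hc : Continuous (fun t : ℝ => max (1 - t) 0) :=
        (continuous_const.sub continuous_id).max continuous_const
      exact (hc.continuousAt.tendsto).comp (nUax (-x) (by linarith))
    have hbeta : betaDF α x = max (1 - (-x) ^ α) 0 := by
      rcases le_or_gt x (-1) with h1 | h1
      · have h2 : (1:ℝ) ≤ -x := by linarith
        have h3 : (1:ℝ) ≤ (-x) ^ α := Real.one_le_rpow h2 hα.le
        rw [betaDF, if_pos h1, max_eq_right (by linarith)]
      · have h2 : -x < 1 := by linarith
        have h3 : (-x) ^ α < 1 := Real.rpow_lt_one (by linarith) h2 hα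
        rw [betaDF, if_neg (not_le.2 h1), if_pos hx.le, abs_of_neg hx,
          max_eq_left (by linarith)]
    rw [hbeta]
    exact hlim.congr fun n => (hkey n).symm
  · -- x = 0
    subst hx
    have hbeta : betaDF α 0 = 1 := by
      rw [betaDF, if_neg (by norm_num), if_pos (le_refl (0:ℝ)), abs_zero,
        Real.zero_rpow hα.ne']
      norm_num
    rw [hbeta]
    apply tendsto_const_nhds.congr
    intro n
    have harg : a n * 0 + ω = ω := by ring
    rw [freePow, harg, A2]
    rw [mul_one]
    have : (n:ℝ) - ((n:ℝ) - 1) = 1 := by ring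
    rw [this, max_eq_left (by norm_num)]
  · -- x > 0
    have hbeta : betaDF α x = 1 := by
      rw [betaDF, if_neg (by intro h; linarith), if_neg (by intro h; linarith)]
    rw [hbeta]
    apply tendsto_const_nhds.congr
    intro n
    have harg : ω < a n * x + ω := by nlinarith [apos n]
    rw [freePow, A1 _ harg, mul_one]
    have : (n:ℝ) - ((n:ℝ) - 1) = 1 := by ring
    rw [this, max_eq_left (by norm_num)]


/-- `F` is in the free max-domain of attraction of the Beta law `B_α` iff
`ω(F) = sup {x | F x < 1}` is finite and `h ↦ 1 - F (ω(F) - h)` is regularly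
varying at `0` of exponent `α`. -/
theorem freeDomAttr_beta_iff_regularlyVarying
    (F : ℝ → ℝ) (hF : IsDistFun F) (α : ℝ) (hα : 0 < α) :
    (∃ a b : ℕ → ℝ, (∀ n, 0 < a n) ∧
        ∀ x : ℝ, Tendsto (fun n => freePow F n (a n * x + b n)) atTop
          (𝓝 (betaDF α x))) ↔
      (BddAbove {y : ℝ | F y < 1} ∧
        ∀ x : ℝ, 0 < x →
          Tendsto (fun h => (1 - F (sSup {y : ℝ | F y < 1} - x * h)) /
              (1 - F (sSup {y : ℝ | F y < 1} - h)))
            (𝓝[>] (0 : ℝ)) (𝓝 (x ^ α))) := by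
  constructor
  · rintro ⟨a, b, hpos, hconv⟩
    exact necessity F hF α hα a b hpos hconv
  · rintro ⟨hB, hRV⟩
    exact sufficiency F hF α hα hB hRV
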